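/- Let C be closed and convex, u ∈ C, v ∈ ℝⁿ, ζ ∈ (0,1], and let w be a feasible inexact projection of v onto C relative to u with forcing parameter ζ (i.e., w ∈ C and ‖w − v‖_D² ≤ ζ‖P_C^D(v) − v‖_D² + (1−ζ)‖u − v‖_D²). Then for all y ∈ C, ⟨D(v − w), y − w⟩ ≤ (1/2)‖w − y‖_D² + (1/2)[ζ‖P_C^D(v) − v‖_D² + (1−ζ)‖u − v‖_D² − ‖y − v‖_D²]. -/

import Mathlib

open RealInnerProductSpace

abbrev EucSp (n : ℕ) := EuclideanSpace ℝ (Fin n)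

noncomputable def dipr {n : ℕ} (D : Matrix (Fin n) (Fin n) ℝ) (x y : EucSp n) : ℝ :=
  ⟪(Matrix.toEuclideanLin D) x, y⟫

noncomputable def dnorm {n : ℕ} (D : Matrix (Fin n) (Fin n) ℝ) (x : EucSp n) : ℝ :=
  Real.sqrt (dipr D x x)

/-- `p` is the exact projection of `v` onto `C` in the `D`-norm. -/
def IsDProj {n : ℕ} (D : Matrix (Fin n) (Fin n) ℝ) (C : Set (EucSp n)) (v p : EucSp n) : Prop :=
  p ∈ C ∧ ∀ z ∈ C, dnorm D (p - v) ≤ dnorm D (z - v)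

theorem stmt5 {n : ℕ} (C : Set (EucSp n)) (hcl : IsClosed C) (hconv : Convex ℝ C)
    (D : Matrix (Fin n) (Fin n) ℝ) (hD : D.PosDef)
    (u : EucSp n) (hu : u ∈ C) (v : EucSp n) (ζ : ℝ) (hζ : 0 < ζ ∧ ζ ≤ 1)
    (p : EucSp n) (hp : IsDProj D C v p)
    (w : EucSp n) (hwC : w ∈ C)
    (hw : (dnorm D (w - v)) ^ 2 ≤
      ζ * (dnorm D (p - v)) ^ 2 + (1 - ζ) * (dnorm D (u - v)) ^ 2) :
    ∀ y ∈ C, dipr D (v - w) (y - w) ≤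
      (1 / 2) * (dnorm D (w - y)) ^ 2 +
        (1 / 2) * (ζ * (dnorm D (p - v)) ^ 2 + (1 - ζ) * (dnorm D (u - v)) ^ 2
          - (dnorm D (y - v)) ^ 2) := by
  intro y _
  have sym : ∀ a b : EucSp n, dipr D a b = dipr D b a := by
    intro a b
    have hs := (Matrix.isHermitian_iff_isSymmetric.mp hD.isHermitian) a b
    rw [dipr, dipr, hs, real_inner_comm]
  have nonneg : ∀ x : EucSp n, 0 ≤ dipr D x x := by
    intro x
    by_cases hx : x = 0
    · simp [dipr, hx]
    · have h2 := hD.dotProduct_mulVec_pos (x := WithLp.ofLp x) (by simpa using hx)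
      refine le_of_lt ?_
      simpa [dipr, Matrix.toEuclideanLin_apply, dotProduct, Matrix.mulVec,
        PiLp.inner_apply, RCLike.inner_apply, mul_comm] using h2
  have sq_dnorm : ∀ x : EucSp n, (dnorm D x) ^ 2 = dipr D x x := by
    intro x
    simp [dnorm, Real.sq_sqrt (nonneg x)]
  have bil : ∀ a b c d : EucSp n,
      dipr D (a - b) (c - d) = dipr D a c - dipr D a d - dipr D b c + dipr D b d := by
    intro a b c d
    simp [dipr, map_sub, inner_sub_left, inner_sub_right]
    ring
  have key : dipr D (v - w) (y - w) =
      (1 / 2) * (dnorm D (w - y)) ^ 2 + (1 / 2) * ((dnorm D (w - v)) ^ 2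
        - (dnorm D (y - v)) ^ 2) := by
    rw [sq_dnorm, sq_dnorm, sq_dnorm, bil, bil, bil, bil, sym v w, sym v y, sym w y]
    ring
  rw [key]
  nlinarith [hw]
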